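/- Let p > 1 be a real number and n a natural number. For all vectors a, b in EuclideanSpace ℝ (Fin n) and all real numbers u, v with u ≥ 0 and v > 0, the Picone expression is nonnegative: ‖a‖^p − p·(u^(p−1)/v^(p−1))·‖b‖^(p−2)·⟪a, b⟫ + (p−1)·(u^p/v^p)·‖b‖^p ≥ 0, where the middle term ‖b‖^(p−2)·⟪a, b⟫ is interpreted as 0 when b = 0. -/

import Mathlib

open Real

/-- Pointwise nonnegativity `L(u,v) ≥ 0` of Picone's identity for the `p`-Laplacian. -/
theorem picone_nonneg (p : ℝ) (hp : 1 < p) (n : ℕ)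
    (a b : EuclideanSpace ℝ (Fin n)) (u v : ℝ) (hu : 0 ≤ u) (hv : 0 < v) :
    0 ≤ ‖a‖ ^ p - p * (u ^ (p - 1) / v ^ (p - 1)) * (‖b‖ ^ (p - 2) * (inner ℝ a b : ℝ))
        + (p - 1) * (u ^ p / v ^ p) * ‖b‖ ^ p := by
  set t : ℝ := u / v with ht
  have ht0 : 0 ≤ t := div_nonneg hu hv.le
  have h1 : u ^ (p - 1) / v ^ (p - 1) = t ^ (p - 1) := (Real.div_rpow hu hv.le _).symm
  have h2 : u ^ p / v ^ p = t ^ p := (Real.div_rpow hu hv.le _).symm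
  rw [h1, h2]
  have hb0 : (0:ℝ) ≤ ‖b‖ := norm_nonneg b
  have ha0 : (0:ℝ) ≤ ‖a‖ := norm_nonneg a
  -- Step 1 : ‖b‖^(p-2) * ⟪a,b⟫ ≤ ‖a‖ * ‖b‖^(p-1)
  have step1 : ‖b‖ ^ (p - 2) * (inner ℝ a b : ℝ) ≤ ‖a‖ * ‖b‖ ^ (p - 1) := by
    rcases eq_or_ne b 0 with rfl | hb
    · simp [Real.zero_rpow (by linarith : p - 1 ≠ 0)]
    · have hbpos : (0:ℝ) < ‖b‖ := norm_pos_iff.mpr hb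
      have : ‖b‖ ^ (p - 2) * (inner ℝ a b : ℝ) ≤ ‖b‖ ^ (p - 2) * (‖a‖ * ‖b‖) :=
        mul_le_mul_of_nonneg_left (real_inner_le_norm a b) (Real.rpow_nonneg hb0 _)
      calc ‖b‖ ^ (p - 2) * (inner ℝ a b : ℝ) ≤ ‖b‖ ^ (p - 2) * (‖a‖ * ‖b‖) := this
        _ = ‖a‖ * (‖b‖ ^ (p - 2) * ‖b‖) := by ring
        _ = ‖a‖ * ‖b‖ ^ (p - 1) := by
            rw [← Real.rpow_add_one hbpos.ne' (p - 2)]; ring_nf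
  -- Step 2 : Young's inequality
  have hpq : p.HolderConjugate (p / (p - 1)) :=
    (Real.holderConjugate_iff_eq_conjExponent hp).2 rfl
  set B : ℝ := t * ‖b‖ with hB
  have hB0 : 0 ≤ B := mul_nonneg ht0 hb0
  have young : ‖a‖ * B ^ (p - 1) ≤ ‖a‖ ^ p / p + (B ^ (p - 1)) ^ (p / (p - 1)) / (p / (p - 1)) :=
    Real.young_inequality_of_nonneg ha0 (Real.rpow_nonneg hB0 _) hpq
  have hBp : (B ^ (p - 1)) ^ (p / (p - 1)) = B ^ p := by
    have he : (p - 1) * (p / (p - 1)) = p := by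
      rw [mul_comm, div_mul_cancel₀ _ (by linarith : p - 1 ≠ 0)]
    rw [← Real.rpow_mul hB0, he]
  have hdiv : B ^ p / (p / (p - 1)) = (p - 1) / p * B ^ p := by
    field_simp
  have young' : p * (‖a‖ * B ^ (p - 1)) ≤ ‖a‖ ^ p + (p - 1) * B ^ p := by
    rw [hBp, hdiv] at young
    have hp0 : (0:ℝ) < p := by linarith
    have := mul_le_mul_of_nonneg_left young hp0.le
    calc p * (‖a‖ * B ^ (p - 1)) ≤ p * (‖a‖ ^ p / p + (p - 1) / p * B ^ p) := this
      _ = ‖a‖ ^ p + (p - 1) * B ^ p := by field_simp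
  have hBp1 : B ^ (p - 1) = t ^ (p - 1) * ‖b‖ ^ (p - 1) := Real.mul_rpow ht0 hb0
  have hBpp : B ^ p = t ^ p * ‖b‖ ^ p := Real.mul_rpow ht0 hb0
  rw [hBp1, hBpp] at young'
  have step2 : p * (t ^ (p - 1) * (‖b‖ ^ (p - 2) * (inner ℝ a b : ℝ)))
      ≤ p * (t ^ (p - 1) * (‖a‖ * ‖b‖ ^ (p - 1))) := by
    apply mul_le_mul_of_nonneg_left _ (by linarith : (0:ℝ) ≤ p)
    exact mul_le_mul_of_nonneg_left step1 (Real.rpow_nonneg ht0 _)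
  nlinarith [young', step2]
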